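/- arXiv:1104.2961 — 2 statements merged into one kernel-verified Lean document; each statement's English description precedes it below -/
import Mathlib

section
/- Let 0 < T < ∞, let a ≥ 0 and C be real constants, and let f : [0, T) → ℝ be differentiable with f'(t) ≥ a·log(T - t) - C - f(t) for all t ∈ [0, T). Then there exists a constant C' (depending only on a, C, T and f(0)) such that f(t) ≥ -C' for all t ∈ [0, T). -/
open Filter

/-- For `x > 0`, `-x * log x ≤ 1`. -/
lemma neg_mul_log_le_one {x : ℝ} (hx : 0 < x) : -(x * Real.log x) ≤ 1 := by
  have h := Real.log_le_sub_one_of_pos (inv_pos.2 hx)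
  rw [Real.log_inv] at h
  have h2 := mul_le_mul_of_nonneg_left h hx.le
  have h3 : x * x⁻¹ = 1 := mul_inv_cancel₀ hx.ne'
  nlinarith

/-- If `0 < T < ∞`, `a ≥ 0`, and `f` is differentiable on `[0, T)` with
`f'(t) ≥ a·log(T - t) - C - f(t)`, then `f` is bounded below on `[0, T)` by a constant. -/
theorem gronwall_log_forcing_with_damping
    (T : ℝ) (hT : 0 < T) (a C : ℝ) (ha : 0 ≤ a) (f f' : ℝ → ℝ)
    (hderiv : ∀ t ∈ Set.Ico (0 : ℝ) T, HasDerivWithinAt f (f' t) (Set.Ico 0 T) t)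
    (hineq : ∀ t ∈ Set.Ico (0 : ℝ) T, a * Real.log (T - t) - C - f t ≤ f' t) :
    ∃ C' : ℝ, ∀ t ∈ Set.Ico (0 : ℝ) T, -C' ≤ f t := by
  set K : ℝ := -C - 2 * a with hK
  set M : ℝ := min 0 (f 0 - (-a * (T * Real.log T) + K)) with hM
  have hM0 : M ≤ 0 := min_le_left _ _
  -- the comparison function
  set φ : ℝ → ℝ := fun t => -a * ((T - t) * Real.log (T - t)) + K + M * Real.exp (-t)
    with hφ
  set φ' : ℝ → ℝ := fun t => a * (Real.log (T - t) + 1) - M * Real.exp (-t) with hφ'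
  have hφderiv : ∀ t ∈ Set.Ico (0 : ℝ) T, HasDerivAt φ (φ' t) t := by
    intro t ht
    have hx : (0 : ℝ) < T - t := by linarith [ht.2]
    have h1 : HasDerivAt (fun s : ℝ => T - s) (-1) t := by
      simpa using (hasDerivAt_id t).const_sub T
    have h2 : HasDerivAt (fun s : ℝ => Real.log (T - s)) ((T - t)⁻¹ * -1) t :=
      (Real.hasDerivAt_log hx.ne').comp t h1
    have h3 : HasDerivAt (fun s : ℝ => (T - s) * Real.log (T - s))
        (-1 * Real.log (T - t) + (T - t) * ((T - t)⁻¹ * -1)) t := h1.mul h2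
    have h4 : HasDerivAt (fun s : ℝ => M * Real.exp (-s)) (M * (Real.exp (-t) * -1)) t := by
      have : HasDerivAt (fun s : ℝ => Real.exp (-s)) (Real.exp (-t) * -1) t :=
        (Real.hasDerivAt_exp (-t)).comp t (hasDerivAt_neg t)
      exact this.const_mul M
    have := ((h3.const_mul (-a)).add_const K).add h4
    refine (this : HasDerivAt φ _ t).congr_deriv ?_
    field_simp [hφ']
    ring
  -- key pointwise inequality : φ t + φ' t ≤ a * log (T - t) - C
  have hφineq : ∀ t ∈ Set.Ico (0 : ℝ) T, φ t + φ' t ≤ a * Real.log (T - t) - C := by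
    intro t ht
    have hx : (0 : ℝ) < T - t := by linarith [ht.2]
    have h1 : -((T - t) * Real.log (T - t)) ≤ 1 := neg_mul_log_le_one hx
    have : -a * ((T - t) * Real.log (T - t)) ≤ a := by nlinarith
    simp only [hφ, hφ']
    nlinarith
  -- w = exp t * (f t - φ t) is monotone on [0, T)
  set w : ℝ → ℝ := fun t => Real.exp t * (f t - φ t) with hw
  have hconvex : Convex ℝ (Set.Ico (0 : ℝ) T) := convex_Ico 0 T
  have hint : interior (Set.Ico (0 : ℝ) T) = Set.Ioo 0 T := interior_Ico
  have hwmono : MonotoneOn w (Set.Ico (0 : ℝ) T) := by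
    apply monotoneOn_of_hasDerivWithinAt_nonneg hconvex
      (f' := fun t => Real.exp t * (f t - φ t) + Real.exp t * (f' t - φ' t))
    · -- continuity
      apply ContinuousOn.mul Real.continuous_exp.continuousOn
      apply ContinuousOn.sub
      · exact fun t ht => (hderiv t ht).continuousWithinAt
      · exact fun t ht => ((hφderiv t ht).continuousAt).continuousWithinAt
    · intro t ht
      rw [hint] at ht
      have ht' : t ∈ Set.Ico (0 : ℝ) T := Set.Ioo_subset_Ico_self ht
      have hmem : Set.Ico (0 : ℝ) T ∈ nhds t :=
        mem_of_superset (Ioo_mem_nhds ht.1 ht.2) Set.Ioo_subset_Ico_self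
      have hf : HasDerivAt f (f' t) t := (hderiv t ht').hasDerivAt hmem
      have : HasDerivAt w (Real.exp t * (f t - φ t) + Real.exp t * (f' t - φ' t)) t := by
        exact (Real.hasDerivAt_exp t).mul (hf.sub (hφderiv t ht'))
      exact (this.hasDerivWithinAt).mono interior_subset
    · intro t ht
      rw [hint] at ht
      have ht' : t ∈ Set.Ico (0 : ℝ) T := Set.Ioo_subset_Ico_self ht
      have h1 := hineq t ht'
      have h2 := hφineq t ht'
      have h3 : 0 ≤ (f t + f' t) - (φ t + φ' t) := by linarith
      have h4 : (0 : ℝ) < Real.exp t := Real.exp_pos t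
      nlinarith
  -- w 0 ≥ 0, i.e. φ 0 ≤ f 0
  have hw0 : 0 ≤ w 0 := by
    have : φ 0 ≤ f 0 := by
      have hM' : M ≤ f 0 - (-a * (T * Real.log T) + K) := min_le_right _ _
      have he : Real.exp (-(0:ℝ)) = 1 := by simp
      simp only [hφ, sub_zero, neg_zero, Real.exp_zero, mul_one]
      linarith
    simp only [hw, Real.exp_zero, one_mul]
    linarith
  -- lower bound for φ on [0, T)
  set L : ℝ := max 0 (T * Real.log T) with hL
  have hφlb : ∀ t ∈ Set.Ico (0 : ℝ) T, -a * L + K + M ≤ φ t := by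
    intro t ht
    have hx : (0 : ℝ) < T - t := by linarith [ht.2]
    have hxT : T - t ≤ T := by linarith [ht.1]
    have hlog : (T - t) * Real.log (T - t) ≤ L := by
      rcases le_or_gt (Real.log (T - t)) 0 with h | h
      · have : (T - t) * Real.log (T - t) ≤ 0 := mul_nonpos_of_nonneg_of_nonpos hx.le h
        exact this.trans (le_max_left _ _)
      · have hlogT : Real.log (T - t) ≤ Real.log T := Real.log_le_log hx hxT
        have : (T - t) * Real.log (T - t) ≤ T * Real.log T := by nlinarith
        exact this.trans (le_max_right _ _)
    have h1 : -a * L ≤ -a * ((T - t) * Real.log (T - t)) := by nlinarith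
    have h2 : M ≤ M * Real.exp (-t) := by
      have he1 : Real.exp (-t) ≤ 1 := Real.exp_le_one_iff.2 (by linarith [ht.1])
      nlinarith [Real.exp_pos (-t)]
    simp only [hφ]
    linarith
  -- conclude
  refine ⟨a * L - K - M, ?_⟩
  intro t ht
  have h0mem : (0 : ℝ) ∈ Set.Ico (0 : ℝ) T := ⟨le_refl 0, hT⟩
  have := hwmono h0mem ht ht.1
  have hwge : 0 ≤ w t := le_trans hw0 this
  have hexp : (0 : ℝ) < Real.exp t := Real.exp_pos t
  have hfφ : φ t ≤ f t := by
    by_contra h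
    push_neg at h
    have : w t < 0 := mul_neg_of_pos_of_neg hexp (by linarith)
    linarith
  have := hφlb t ht
  linarith
end

section
/- Let X be a nonempty compact topological space, let u : ℝ × X → ℝ be continuous, and suppose there is a continuous function v : ℝ × X → ℝ such that for each x ∈ X, the map t ↦ u(t, x) is differentiable with derivative v(t, x). Define U(t) = min_{x ∈ X} u(t, x). Let t₁ ≤ t₂ and let g : ℝ → ℝ be continuous such that for every t ∈ [t₁, t₂] and every x ∈ X attaining the minimum u(t, x) = U(t), one has v(t, x) ≥ g(t). Then U(t₂) - U(t₁) ≥ ∫_{t₁}^{t₂} g(s) ds. In particular, U is locally Lipschitz. -/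
open Filter

/-- Hamilton's trick: Let `X` be a nonempty compact space, `u : ℝ × X → ℝ`
continuous with continuous time-derivative `v`. Let `U(t) = min_x u(t, x)`. If `t₁ ≤ t₂`
and `g` is continuous with `v(t, x) ≥ g(t)` whenever `t ∈ [t₁, t₂]` and `x` attains the
minimum of `u(t, ·)`, then `U(t₂) - U(t₁) ≥ ∫_{t₁}^{t₂} g`. In particular `U` is locally
Lipschitz. -/
theorem hamilton_trick_min
    {X : Type*} [TopologicalSpace X] [CompactSpace X] [Nonempty X]
    (u v : ℝ × X → ℝ) (hu : Continuous u) (hv : Continuous v)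
    (hderiv : ∀ x : X, ∀ t : ℝ, HasDerivAt (fun s => u (s, x)) (v (t, x)) t)
    (U : ℝ → ℝ) (hU : ∀ t, U t = ⨅ x : X, u (t, x)) :
    (∀ t₁ t₂ : ℝ, t₁ ≤ t₂ → ∀ g : ℝ → ℝ, Continuous g →
        (∀ t ∈ Set.Icc t₁ t₂, ∀ x : X, u (t, x) = U t → g t ≤ v (t, x)) →
        ∫ s in t₁..t₂, g s ≤ U t₂ - U t₁) ∧
    LocallyLipschitz U := by
  classical
  -- continuity of `u (·, x)`
  have hcx : ∀ x : X, Continuous fun s : ℝ => u (s, x) := fun x =>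
    hu.comp (continuous_id.prodMk continuous_const)
  -- existence of minimizers
  have hmin : ∀ t : ℝ, ∃ x : X, (∀ y : X, u (t, x) ≤ u (t, y)) ∧ u (t, x) = U t := by
    intro t
    obtain ⟨x, -, hx⟩ := isCompact_univ.exists_isMinOn Set.univ_nonempty
      (hu.comp (continuous_const.prodMk continuous_id)).continuousOn
    have hx : ∀ y : X, u (t, x) ≤ u (t, y) := fun y => hx (Set.mem_univ y)
    refine ⟨x, hx, ?_⟩
    rw [hU t]
    refine le_antisymm (le_ciInf fun y => hx y) ?_
    exact ciInf_le ⟨u (t, x), Set.forall_mem_range.2 fun y => hx y⟩ x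
  choose m hm hmU using hmin
  have hUle : ∀ t : ℝ, ∀ y : X, U t ≤ u (t, y) := fun t y => (hmU t) ▸ hm t y
  -- local Lipschitz
  have hLip : LocallyLipschitz U := by
    intro t₀
    obtain ⟨M, hM⟩ := (isCompact_Icc (a := t₀ - 1) (b := t₀ + 1)).prod
      isCompact_univ |>.exists_bound_of_continuousOn hv.continuousOn
    refine ⟨Real.toNNReal M, Set.Icc (t₀ - 1) (t₀ + 1),
      Icc_mem_nhds (by linarith) (by linarith), ?_⟩
    have key : ∀ x : X, ∀ s ∈ Set.Icc (t₀ - 1) (t₀ + 1), ∀ t ∈ Set.Icc (t₀ - 1) (t₀ + 1),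
        ‖u (s, x) - u (t, x)‖ ≤ M * ‖s - t‖ := by
      intro x s hs t ht
      exact (convex_Icc _ _).norm_image_sub_le_of_norm_hasDerivWithin_le
        (fun ξ hξ => (hderiv x ξ).hasDerivWithinAt)
        (fun ξ hξ => hM (ξ, x) ⟨hξ, Set.mem_univ x⟩) ht hs
    apply LipschitzOnWith.of_dist_le_mul
    intro s hs t ht
    have h1 : U s - U t ≤ M * ‖s - t‖ := by
      have := key (m t) s hs t ht
      have h2 : U s ≤ u (s, m t) := hUle s (m t)
      have h3 : u (t, m t) = U t := hmU t
      have := le_trans (le_abs_self _) this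
      simp only [Real.norm_eq_abs] at this ⊢
      linarith
    have h2 : U t - U s ≤ M * ‖s - t‖ := by
      have := key (m s) t ht s hs
      have h2 : U t ≤ u (t, m s) := hUle t (m s)
      have h3 : u (s, m s) = U s := hmU s
      have := le_trans (le_abs_self _) this
      simp only [Real.norm_eq_abs, abs_sub_comm t s] at this ⊢
      linarith
    have hMle : M * ‖s - t‖ ≤ (Real.toNNReal M : ℝ) * dist s t := by
      rw [Real.dist_eq, Real.norm_eq_abs]
      exact mul_le_mul_of_nonneg_right (Real.le_coe_toNNReal M) (abs_nonneg _)
    rw [Real.dist_eq]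
    calc |U s - U t| ≤ M * ‖s - t‖ := abs_sub_le_iff.2 ⟨h1, h2⟩
      _ ≤ (Real.toNNReal M : ℝ) * dist s t := hMle
  have hUcont : Continuous U := hLip.continuous
  refine ⟨?_, hLip⟩
  intro t₁ t₂ h12 g hg hbound
  -- primitive of g
  set F : ℝ → ℝ := fun t => ∫ s in t₁..t, g s with hF_def
  have hF : ∀ t : ℝ, HasDerivAt F (g t) t := fun t =>
    intervalIntegral.integral_hasDerivAt_right (hg.intervalIntegrable _ _)
      hg.stronglyMeasurable.stronglyMeasurableAtFilter hg.continuousAt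
  set B : ℝ → ℝ := fun t => -U t₁ - F t with hB_def
  have hB : ∀ t : ℝ, HasDerivAt B (-g t) t := fun t => (hF t).const_sub _
  -- key slope bound
  have bound : ∀ t ∈ Set.Ico t₁ t₂, ∀ r, -g t < r →
      ∃ᶠ z in nhdsWithin t (Set.Ioi t), slope (fun s => -U s) t z < r := by
    intro t ht r hr
    obtain ⟨c, hc1, hc2⟩ := exists_between hr
    -- c gives -c < g t; set c' = -c, so c' < g t
    -- cluster point of minimizers
    obtain ⟨x₀, hx₀⟩ := exists_clusterPt_of_compactSpace (Filter.map m (nhdsWithin t (Set.Ioi t)))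
    have hx₀' : MapClusterPt x₀ (nhdsWithin t (Set.Ioi t)) m := hx₀
    have hpair : MapClusterPt (t, x₀) (nhdsWithin t (Set.Ioi t)) (fun s => (s, m s)) := by
      rw [mapClusterPt_iff_frequently]
      intro W hW
      rw [nhds_prod_eq] at hW
      obtain ⟨A, hA, N, hN, hAN⟩ := Filter.mem_prod_iff.1 hW
      have h1 : ∃ᶠ s in nhdsWithin t (Set.Ioi t), m s ∈ N := mapClusterPt_iff_frequently.1 hx₀' N hN
      have h2 : ∀ᶠ s in nhdsWithin t (Set.Ioi t), s ∈ A :=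
        mem_nhdsWithin_of_mem_nhds hA
      exact (h1.and_eventually h2).mono fun s hs => hAN ⟨hs.2, hs.1⟩
    -- x₀ is a minimizer at t
    have hx₀min : u (t, x₀) = U t := by
      have hcF : Continuous fun p : ℝ × X => u p - U p.1 :=
        hu.sub (hUcont.comp continuous_fst)
      have h := hpair.continuousAt_comp hcF.continuousAt
      have heq : ((fun p : ℝ × X => u p - U p.1) ∘ fun s => (s, m s)) = fun _ => (0 : ℝ) := by
        funext s; simp [hmU s]
      rw [heq] at h
      have h2 : ClusterPt (u (t, x₀) - U t) (pure (0 : ℝ)) := by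
        have := h.clusterPt
        rwa [Filter.map_const] at this
      have h3 : u (t, x₀) - U t ∈ closure ({(0 : ℝ)} : Set ℝ) := by
        rw [mem_closure_iff_clusterPt, principal_singleton]
        exact h2
      rw [closure_singleton, Set.mem_singleton_iff, sub_eq_zero] at h3
      exact h3
    have hvge : g t ≤ v (t, x₀) := hbound t (Set.Ico_subset_Icc_self ht) x₀ hx₀min
    have hvc : -c < v (t, x₀) := lt_of_lt_of_le (by linarith) hvge
    -- open neighborhood where v > -c
    have hW : v ⁻¹' Set.Ioi (-c) ∈ nhds (t, x₀) :=
      (isOpen_Ioi.preimage hv).mem_nhds hvc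
    rw [nhds_prod_eq] at hW
    obtain ⟨A, hA, N, hN, hAN⟩ := Filter.mem_prod_iff.1 hW
    obtain ⟨l, uu, htlu, hlu⟩ := mem_nhds_iff_exists_Ioo_subset.1 hA
    have hfreq : ∃ᶠ s in nhdsWithin t (Set.Ioi t),
        ((s, m s) ∈ Set.Ioo l uu ×ˢ N ∧ s ∈ Set.Ioi t) := by
      have h1 : ∃ᶠ s in nhdsWithin t (Set.Ioi t), (s, m s) ∈ Set.Ioo l uu ×ˢ N := by
        apply mapClusterPt_iff_frequently.1 hpair
        rw [nhds_prod_eq]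
        exact Filter.prod_mem_prod (Ioo_mem_nhds htlu.1 htlu.2) hN
      exact h1.and_eventually self_mem_nhdsWithin
    refine hfreq.mono ?_
    rintro s ⟨⟨hs1, hs2⟩, hs3⟩
    have hts : t < s := hs3
    -- derivative bound on [t, s]
    have hslope : -c * (s - t) ≤ u (s, m s) - u (t, m s) := by
      apply (convex_Icc t s).mul_sub_le_image_sub_of_le_deriv
        (hcx (m s)).continuousOn
        (fun ξ _ => (hderiv (m s) ξ).differentiableAt.differentiableWithinAt)
        (C := -c) ?_ t (Set.left_mem_Icc.2 hts.le) s (Set.right_mem_Icc.2 hts.le) hts.le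
      intro ξ hξ
      rw [interior_Icc] at hξ
      have hξmem : (ξ, m s) ∈ Set.Ioo l uu ×ˢ N := by
        constructor
        · exact ⟨lt_trans htlu.1 hξ.1, lt_trans hξ.2 hs1.2⟩
        · exact hs2
      have : -c < v (ξ, m s) := hAN ⟨hlu hξmem.1, hξmem.2⟩
      rw [(hderiv (m s) ξ).deriv]
      exact this.le
    have hUs : -c * (s - t) ≤ U s - U t := by
      have h1 : U s = u (s, m s) := (hmU s).symm
      have h2 : U t ≤ u (t, m s) := hUle t (m s)
      linarith
    have hslopeU : -c ≤ slope U t s := by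
      rw [slope_def_field]
      rw [le_div_iff₀ (sub_pos.2 hts)]
      linarith
    have : slope (fun s => -U s) t s = -slope U t s := by
      simp [slope_def_field, neg_div, neg_sub, div_eq_div_iff]
      ring
    rw [this]
    linarith
  -- apply the fencing theorem
  have hfence := image_le_of_liminf_slope_right_le_deriv_boundary
    (f := fun s => -U s) (a := t₁) (b := t₂)
    (hUcont.neg.continuousOn) (B := B) (B' := fun t => -g t)
    (by simp [hB_def, hF_def, intervalIntegral.integral_same])
    (fun s _ => (hB s).continuousAt.continuousWithinAt)
    (fun s _ => (hB s).hasDerivWithinAt) bound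
  have := hfence (Set.right_mem_Icc.2 h12)
  simp only [hB_def, hF_def] at this
  linarith
end
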